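/- Let λ₁,…,λ_m be real numbers with H_p > 0 and such that all the Newton transformations T_0,…,T_{p-1} are positive definite; equivalently, assume H_{k;l} > 0 for all k ∈ {1,…,p−1} and all l, and H_k > 0 for k ≤ p. Then for all 1 ≤ i < j ≤ p and every l ∈ {1,…,m}, the strict inequality j·H_i·H_{j-1;l} > i·H_j·H_{i-1;l} holds. -/

import Mathlib

namespace NewtonAux
open Polynomial

/-- Normalized elementary symmetric function of a multiset. -/
noncomputable def Nk (s : Multiset ℝ) (k : ℕ) : ℝ :=
  s.esymm k / ((Multiset.card s).choose k)

lemma esymm_zero (s : Multiset ℝ) : s.esymm 0 = 1 := by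
  simp [Multiset.esymm]

lemma esymm_cons (a : ℝ) (s : Multiset ℝ) (k : ℕ) :
    (a ::ₘ s).esymm (k + 1) = s.esymm (k + 1) + a * s.esymm k := by
  rw [Multiset.esymm, Multiset.powersetCard_cons, Multiset.map_add, Multiset.sum_add,
    Multiset.map_map]
  congr 1
  rw [Multiset.esymm, ← Multiset.sum_map_mul_left]
  congr 1
  refine Multiset.map_congr rfl fun t _ => ?_
  simp

lemma esymm_of_card_lt {s : Multiset ℝ} {k : ℕ} (h : Multiset.card s < k) :
    s.esymm k = 0 := by
  simp [Multiset.esymm, Multiset.powersetCard_eq_empty _ h]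

lemma esymm_one' (s : Multiset ℝ) : s.esymm 1 = s.sum := by
  simp [Multiset.esymm, Multiset.powersetCard_one, Multiset.map_map, Function.comp_def]

lemma esymm_self (s : Multiset ℝ) : s.esymm (Multiset.card s) = s.prod := by
  induction s using Multiset.induction_on with
  | empty => simp [esymm_zero]
  | cons a s ih =>
      rw [Multiset.card_cons, esymm_cons, esymm_of_card_lt (by simp), Multiset.prod_cons, ih]
      ring

lemma esymm_two (s : Multiset ℝ) :
    2 * s.esymm 2 + (s.map (fun x => x ^ 2)).sum = s.sum ^ 2 := by
  induction s using Multiset.induction_on with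
  | empty => simp [esymm_of_card_lt (s := 0) (k := 2) (by simp)]
  | cons a s ih =>
      have h1 : (a ::ₘ s).esymm 2 = s.esymm 2 + a * s.esymm 1 := esymm_cons a s 1
      rw [h1, esymm_one', Multiset.map_cons, Multiset.sum_cons, Multiset.sum_cons]
      nlinarith [ih]

lemma cauchy (s : Multiset ℝ) :
    s.sum ^ 2 ≤ (Multiset.card s) * (s.map (fun x => x ^ 2)).sum := by
  induction s using Multiset.induction_on with
  | empty => simp
  | cons a s ih =>
      rw [Multiset.sum_cons, Multiset.map_cons, Multiset.sum_cons, Multiset.card_cons]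
      push_cast
      rcases Nat.eq_zero_or_pos (Multiset.card s) with h0 | h0
      · obtain rfl : s = 0 := Multiset.card_eq_zero.1 h0
        simp
      · have hn : (0 : ℝ) < (Multiset.card s : ℝ) := by exact_mod_cast h0
        set n : ℝ := (Multiset.card s : ℝ)
        set S : ℝ := s.sum
        set Q : ℝ := (s.map (fun x => x ^ 2)).sum
        have hG : (n + 1) * (a ^ 2 + Q) - (a + S) ^ 2
            = ((n * a - S) ^ 2 + (n + 1) * (n * Q - S ^ 2)) / n := by
          field_simp
          ring
        have h1 : (0 : ℝ) ≤ (n * a - S) ^ 2 := sq_nonneg _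
        have h2 : (0 : ℝ) ≤ n * Q - S ^ 2 := by linarith [ih]
        have h3 : (0 : ℝ) ≤ ((n * a - S) ^ 2 + (n + 1) * (n * Q - S ^ 2)) / n := by positivity
        linarith [hG, h3]

lemma Nk_zero (s : Multiset ℝ) : Nk s 0 = 1 := by
  simp [Nk, esymm_zero]

lemma Nk_of_card_lt {s : Multiset ℝ} {k : ℕ} (h : Multiset.card s < k) : Nk s k = 0 := by
  simp [Nk, esymm_of_card_lt h]

lemma lemmaA (s : Multiset ℝ) : Nk s 0 * Nk s 2 ≤ Nk s 1 ^ 2 := by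
  rw [Nk_zero, one_mul]
  set n := Multiset.card s with hn
  rcases lt_or_ge n 2 with h | h
  · rw [Nk_of_card_lt h]
    positivity
  · have hn0 : 0 < n := by omega
    have hC2 : (2 : ℕ) * n.choose 2 = n * (n - 1) := by
      have h1 := Nat.choose_succ_right_eq n 1
      simp [Nat.choose_one_right] at h1
      omega
    have hC2pos : 0 < n.choose 2 := Nat.choose_pos h
    rw [Nk, Nk, ← hn, esymm_one', Nat.choose_one_right]
    rw [div_pow, div_le_div_iff₀ (by exact_mod_cast hC2pos) (by positivity)]
    have key := cauchy s
    have h2 := esymm_two s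
    have hcast : (2 : ℝ) * (n.choose 2 : ℝ) = (n : ℝ) * ((n : ℝ) - 1) := by
      have h3 : ((2 * n.choose 2 : ℕ) : ℝ) = ((n * (n - 1) : ℕ) : ℝ) := by rw [hC2]
      push_cast [Nat.cast_sub hn0] at h3
      linarith [h3]
    have hnR : (0 : ℝ) < (n : ℝ) := by exact_mod_cast hn0
    have hprod : (0 : ℝ) ≤ (n : ℝ) * ((n : ℝ) * ((s.map (fun x => x ^ 2)).sum) - s.sum ^ 2) :=
      mul_nonneg hnR.le (by linarith [key])
    nlinarith [hprod, h2, hcast]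


lemma choose_id {n i : ℕ} (h : i < n) :
    (n - i) * n.choose i = n * (n - 1).choose i := by
  have h1 := Nat.choose_succ_right_eq n i
  have h2 := Nat.add_one_mul_choose_eq (n - 1) i
  rw [show n - 1 + 1 = n by omega] at h2
  rw [Nat.mul_comm (n - i)]
  omega

lemma deriv_step (s : Multiset ℝ) (h1 : 1 ≤ Multiset.card s) :
    ∃ t : Multiset ℝ, Multiset.card t = Multiset.card s - 1 ∧
      ∀ i, i ≤ Multiset.card s - 1 → Nk t i = Nk s i := by
  classical
  set n := Multiset.card s with hn
  set q : Polynomial ℝ := (s.map (fun a => X - C a)).prod with hq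
  have hdeg : q.natDegree = n := by
    rw [hq, natDegree_multiset_prod_X_sub_C_eq_card]
  have hroots : q.roots = s := roots_multiset_prod_X_sub_C s
  have hmonic : q.Monic := monic_multiset_prod_of_monic _ _ fun a _ => monic_X_sub_C a
  set q' := derivative q with hq'
  have hd1 : q'.natDegree ≤ n - 1 := hdeg ▸ natDegree_derivative_le q
  have hc1 : n - 1 ≤ Multiset.card q'.roots := by
    have h := card_roots_le_derivative q
    rw [hroots, ← hn, ← hq'] at h
    omega
  have hc2 : Multiset.card q'.roots ≤ q'.natDegree := card_roots' q'
  have hdeg' : q'.natDegree = n - 1 := le_antisymm hd1 (le_trans hc1 hc2)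
  have hcard' : Multiset.card q'.roots = n - 1 := le_antisymm (hdeg' ▸ hc2) hc1
  set t := q'.roots with ht
  have hlead : q'.leadingCoeff = (n : ℝ) := by
    rw [Polynomial.leadingCoeff, hdeg', hq', coeff_derivative]
    rw [show n - 1 + 1 = n by omega, ← hdeg, hmonic.coeff_natDegree]
    rw [hdeg]
    push_cast [Nat.cast_sub h1]
    ring
  refine ⟨t, hcard', fun i hi => ?_⟩
  have hA : q'.coeff (n - 1 - i) =
      (n : ℝ) * ((-1) ^ i * t.esymm i) := by
    have := Polynomial.coeff_eq_esymm_roots_of_card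
      (p := q') (k := n - 1 - i) (hdeg' ▸ hcard') (by omega)
    rw [this, hlead, hdeg', show n - 1 - (n - 1 - i) = i by omega]
    ring
  have hB : q'.coeff (n - 1 - i) = (n - i : ℕ) * ((-1) ^ i * s.esymm i) := by
    rw [hq', coeff_derivative]
    have hqc := Polynomial.coeff_eq_esymm_roots_of_card
      (p := q) (k := n - 1 - i + 1) (hdeg ▸ (hroots ▸ hn.symm)) (by omega)
    rw [hqc, hmonic.leadingCoeff, hdeg, hroots,
      show n - (n - 1 - i + 1) = i by omega]
    have hc : ((n - 1 - i : ℕ) : ℝ) + 1 = ((n - i : ℕ) : ℝ) := by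
      have h4 : (n - 1 - i) + 1 = n - i := by omega
      exact_mod_cast congrArg (Nat.cast : ℕ → ℝ) h4
    rw [hc]
    ring
  have hkey : (n : ℝ) * t.esymm i = (n - i : ℕ) * s.esymm i := by
    have h := hA.symm.trans hB
    rcases Nat.even_or_odd i with he | ho
    · rw [he.neg_one_pow] at h
      simpa using h
    · rw [ho.neg_one_pow] at h
      simp only [neg_one_mul, mul_neg, neg_inj] at h
      exact h
  rw [Nk, Nk, hcard', ← hn]
  have hi' : i < n := by omega
  have hcid := choose_id hi'
  have hC1 : (0 : ℝ) < ((n - 1).choose i : ℝ) := by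
    exact_mod_cast Nat.choose_pos (by omega : i ≤ n - 1)
  have hC2 : (0 : ℝ) < (n.choose i : ℝ) := by
    exact_mod_cast Nat.choose_pos (by omega : i ≤ n)
  have hnR : (0 : ℝ) < (n : ℝ) := by exact_mod_cast (by omega : 0 < n)
  rw [div_eq_div_iff hC1.ne' hC2.ne']
  have hcidR : ((n - i : ℕ) : ℝ) * (n.choose i : ℝ) = (n : ℝ) * ((n - 1).choose i : ℝ) := by
    exact_mod_cast hcid
  have hmain : (n : ℝ) * (t.esymm i * ((n - 1).choose i : ℝ))
      = (n : ℝ) * (s.esymm i * ((n - 1).choose i : ℝ)) → True := fun _ => trivial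
  have heq : (n : ℝ) * (t.esymm i * (n.choose i : ℝ))
      = (n : ℝ) * (s.esymm i * ((n - 1).choose i : ℝ)) := by
    calc (n : ℝ) * (t.esymm i * (n.choose i : ℝ))
        = ((n : ℝ) * t.esymm i) * (n.choose i : ℝ) := by ring
      _ = (((n - i : ℕ) : ℝ) * s.esymm i) * (n.choose i : ℝ) := by rw [hkey]
      _ = s.esymm i * (((n - i : ℕ) : ℝ) * (n.choose i : ℝ)) := by ring
      _ = s.esymm i * ((n : ℝ) * ((n - 1).choose i : ℝ)) := by rw [hcidR]
      _ = (n : ℝ) * (s.esymm i * ((n - 1).choose i : ℝ)) := by ring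
  exact mul_left_cancel₀ hnR.ne' heq


lemma esymm_inv (s : Multiset ℝ) (h0 : (0 : ℝ) ∉ s) :
    ∀ j, j ≤ Multiset.card s →
      (s.map (fun x => x⁻¹)).esymm j * s.prod = s.esymm (Multiset.card s - j) := by
  induction s using Multiset.induction_on with
  | empty =>
      intro j hj
      simp only [Multiset.card_zero, Nat.le_zero] at hj
      subst hj
      simp [esymm_zero]
  | cons a s ih =>
      have ha : a ≠ 0 := by rintro rfl; exact h0 (Multiset.mem_cons_self 0 s)
      have h0s : (0 : ℝ) ∉ s := fun h => h0 (Multiset.mem_cons_of_mem h)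
      intro j hj
      rw [Multiset.card_cons] at hj
      rw [Multiset.map_cons, Multiset.prod_cons, Multiset.card_cons]
      rcases Nat.eq_zero_or_pos j with rfl | hj1
      · rw [esymm_zero, one_mul, Nat.sub_zero,
          show Multiset.card s + 1 = Multiset.card (a ::ₘ s) from (Multiset.card_cons a s).symm,
          esymm_self, Multiset.prod_cons]
      · obtain ⟨j', rfl⟩ : ∃ j', j = j' + 1 := ⟨j - 1, by omega⟩
        rw [esymm_cons]
        rcases Nat.lt_or_ge j' (Multiset.card s) with hlt | hge
        · have ih1 := ih h0s (j' + 1) (by omega)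
          have ih2 := ih h0s j' (by omega)
          have hrec : (a ::ₘ s).esymm (Multiset.card s + 1 - (j' + 1))
              = s.esymm (Multiset.card s - j') + a * s.esymm (Multiset.card s - (j' + 1)) := by
            rw [show Multiset.card s + 1 - (j' + 1) = (Multiset.card s - (j' + 1)) + 1 by omega,
              esymm_cons, show Multiset.card s - (j' + 1) + 1 = Multiset.card s - j' by omega]
          have expand : ((s.map fun x => x⁻¹).esymm (j' + 1)
                + a⁻¹ * (s.map fun x => x⁻¹).esymm j') * (a * s.prod)
              = a * ((s.map fun x => x⁻¹).esymm (j' + 1) * s.prod)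
                + (a⁻¹ * a) * ((s.map fun x => x⁻¹).esymm j' * s.prod) := by ring
          rw [hrec, expand, inv_mul_cancel₀ ha, ih1, ih2, one_mul]
          ring
        · have hj'eq : j' = Multiset.card s := by omega
          subst hj'eq
          have ih2 := ih h0s (Multiset.card s) le_rfl
          rw [Nat.sub_self, esymm_zero] at ih2
          rw [esymm_of_card_lt (by simp), zero_add,
            show Multiset.card s + 1 - (Multiset.card s + 1) = 0 by omega, esymm_zero]
          have expand : (a⁻¹ * (s.map fun x => x⁻¹).esymm (Multiset.card s)) * (a * s.prod)
              = (a⁻¹ * a) * ((s.map fun x => x⁻¹).esymm (Multiset.card s) * s.prod) := by ring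
          rw [expand, ih2, inv_mul_cancel₀ ha, mul_one]

theorem newton_ms : ∀ (n : ℕ) (s : Multiset ℝ), Multiset.card s = n →
    ∀ k, 1 ≤ k → Nk s (k - 1) * Nk s (k + 1) ≤ Nk s k ^ 2 := by
  intro n
  induction n using Nat.strong_induction_on with
  | _ n IH =>
    intro s hcard k hk
    rcases Nat.lt_or_ge n (k + 1) with hbig | hle
    · rw [Nk_of_card_lt (k := k + 1) (by omega), mul_zero]
      positivity
    rcases Nat.eq_or_lt_of_le hk with rfl | hk2
    · simpa using lemmaA s
    -- now 2 ≤ k, k + 1 ≤ n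
    rcases Nat.lt_or_ge (k + 1) n with hklt | hkeq
    · -- derivative step
      obtain ⟨t, htc, hte⟩ := deriv_step s (by omega)
      rw [hcard] at htc hte
      have h1 := hte (k - 1) (by omega)
      have h2 := hte k (by omega)
      have h3 := hte (k + 1) (by omega)
      rw [← h1, ← h2, ← h3]
      exact IH (n - 1) (by omega) t (by omega) k hk
    · -- top case : k + 1 = n
      have hn : n = k + 1 := by omega
      by_cases h0 : (0 : ℝ) ∈ s
      · have hzero : s.prod = 0 := Multiset.prod_eq_zero h0
        have : Nk s (k + 1) = 0 := by
          rw [Nk, ← hn, ← hcard, esymm_self, hzero]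
          simp
        rw [this, mul_zero]
        positivity
      · set t := s.map (fun x => x⁻¹) with htdef
        have htc : Multiset.card t = n := by rw [htdef, Multiset.card_map, hcard]
        have hNk : ∀ j, j ≤ n → Nk s (n - j) = s.prod * Nk t j := by
          intro j hj
          have hinv := esymm_inv s h0 j (by omega)
          rw [hcard] at hinv
          rw [Nk, Nk, hcard, htc, Nat.choose_symm hj, ← hinv]
          ring
        have hA := lemmaA t
        have e0 : Nk s (n - 0) = s.prod * Nk t 0 := hNk 0 (by omega)
        have e1 : Nk s (n - 1) = s.prod * Nk t 1 := hNk 1 (by omega)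
        have e2 : Nk s (n - 2) = s.prod * Nk t 2 := hNk 2 (by omega)
        rw [show k - 1 = n - 2 by omega, show k + 1 = n - 0 by omega, show k = n - 1 by omega]
        rw [e0, e1, e2, Nk_zero, mul_one]
        calc s.prod * Nk t 2 * s.prod = s.prod ^ 2 * (Nk t 0 * Nk t 2) := by
              rw [Nk_zero]; ring
          _ ≤ s.prod ^ 2 * Nk t 1 ^ 2 := by
              apply mul_le_mul_of_nonneg_left hA (by positivity)
          _ = (s.prod * Nk t 1) ^ 2 := by ring

end NewtonAux

open Finset

/-- The `k`-th elementary symmetric polynomial of `λ₁,…,λ_m`. -/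
noncomputable def esymm (m k : ℕ) (lam : Fin m → ℝ) : ℝ :=
  ∑ s ∈ (Finset.univ : Finset (Fin m)).powersetCard k, ∏ i ∈ s, lam i

/-- The `k`-th elementary symmetric polynomial of the `m−1` variables with `λ_l` omitted. -/
noncomputable def esymmOmit (m k : ℕ) (lam : Fin m → ℝ) (l : Fin m) : ℝ :=
  ∑ s ∈ ((Finset.univ : Finset (Fin m)).erase l).powersetCard k, ∏ i ∈ s, lam i

/-- Normalized `k`-th elementary symmetric function `H_k = σ_k / C(m,k)`. -/
noncomputable def Hk (m k : ℕ) (lam : Fin m → ℝ) : ℝ := esymm m k lam / (m.choose k)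

/-- Normalized `k`-th elementary symmetric function of the tuple with `λ_l` omitted. -/
noncomputable def HkOmit (m k : ℕ) (lam : Fin m → ℝ) (l : Fin m) : ℝ :=
  esymmOmit m k lam l / ((m - 1).choose k)

open NewtonAux in
/-- j·H_i·H_{j-1;l} > i·H_j·H_{i-1;l} under the positivity assumptions. -/
theorem strict_cross_inequality (m p : ℕ) (hm : 2 ≤ m) (lam : Fin m → ℝ)
    (hposOmit : ∀ k, 1 ≤ k → k ≤ p - 1 → ∀ l : Fin m, 0 < HkOmit m k lam l)
    (hpos : ∀ k, 1 ≤ k → k ≤ p → 0 < Hk m k lam)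
    (i j : ℕ) (hi : 1 ≤ i) (hij : i < j) (hjp : j ≤ p) (l : Fin m) :
    (i : ℝ) * Hk m j lam * HkOmit m (i - 1) lam l <
      (j : ℝ) * Hk m i lam * HkOmit m (j - 1) lam l := by
  classical
  set sM : Multiset ℝ := Finset.univ.val.map lam with hsM
  set sOm : Multiset ℝ := ((Finset.univ.erase l).val).map lam with hsOm
  have hcardM : Multiset.card sM = m := by simp [hsM]
  have hcardOm : Multiset.card sOm = m - 1 := by
    simp [hsOm, Finset.card_erase_of_mem (Finset.mem_univ l)]
  have hHk : ∀ k, Hk m k lam = Nk sM k := by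
    intro k
    rw [Hk, Nk, hcardM]
    congr 1
    rw [hsM, Finset.esymm_map_val]
    rfl
  have hHkO : ∀ k, HkOmit m k lam l = Nk sOm k := by
    intro k
    rw [HkOmit, Nk, hcardOm]
    congr 1
    rw [hsOm, Finset.esymm_map_val]
    rfl
  have hcons : sM = lam l ::ₘ sOm := by
    have h1 : (Finset.univ : Finset (Fin m)).val = l ::ₘ ((Finset.univ : Finset (Fin m)).val.erase l) :=
      (Multiset.cons_erase (by simp)).symm
    rw [hsM, hsOm, Finset.erase_val]
    conv_lhs => rw [h1]
    rw [Multiset.map_cons]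
  have hmR : (0 : ℝ) < (m : ℝ) := by exact_mod_cast (by omega : 0 < m)
  have hrecur : ∀ k, 1 ≤ k → k ≤ m →
      (m : ℝ) * Nk sM k = ((m - k : ℕ) : ℝ) * Nk sOm k + (k : ℝ) * lam l * Nk sOm (k - 1) := by
    intro k hk1 hkm
    obtain ⟨k', rfl⟩ : ∃ k', k = k' + 1 := ⟨k - 1, by omega⟩
    have hE : sM.esymm (k' + 1) = sOm.esymm (k' + 1) + lam l * sOm.esymm k' := by
      rw [hcons, esymm_cons]
    have hCm : (0 : ℝ) < (m.choose (k' + 1) : ℝ) := by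
      exact_mod_cast Nat.choose_pos (by omega)
    have hCo' : (0 : ℝ) < ((m - 1).choose k' : ℝ) := by
      exact_mod_cast Nat.choose_pos (by omega)
    have hid2 : ((k' + 1 : ℕ) : ℝ) * (m.choose (k' + 1) : ℝ)
        = (m : ℝ) * ((m - 1).choose k' : ℝ) := by
      have h := Nat.add_one_mul_choose_eq (m - 1) k'
      rw [show m - 1 + 1 = m by omega, Nat.mul_comm (m.choose (k' + 1))] at h
      exact_mod_cast h.symm
    have t2 : (m : ℝ) * (lam l * sOm.esymm k' / (m.choose (k' + 1) : ℝ))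
        = ((k' + 1 : ℕ) : ℝ) * lam l * Nk sOm k' := by
      rw [Nk, hcardOm]
      field_simp
      push_cast at hid2 ⊢
      linear_combination (-(lam l * sOm.esymm k')) * hid2
    have t1 : (m : ℝ) * (sOm.esymm (k' + 1) / (m.choose (k' + 1) : ℝ))
        = ((m - (k' + 1) : ℕ) : ℝ) * Nk sOm (k' + 1) := by
      rcases Nat.lt_or_ge (k' + 1) m with hlt | hge
      · have hCo : (0 : ℝ) < ((m - 1).choose (k' + 1) : ℝ) := by
          exact_mod_cast Nat.choose_pos (by omega)
        have hid1 : ((m - (k' + 1) : ℕ) : ℝ) * (m.choose (k' + 1) : ℝ)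
            = (m : ℝ) * ((m - 1).choose (k' + 1) : ℝ) := by
          exact_mod_cast choose_id hlt
        have hsub : ((m - (k' + 1) : ℕ) : ℝ) = (m : ℝ) - (k' : ℝ) - 1 := by
          push_cast [Nat.cast_sub (by omega : k' + 1 ≤ m)]
          ring
        rw [Nk, hcardOm]
        field_simp
        rw [hsub] at hid1
        linear_combination (-(sOm.esymm (k' + 1))) * hid1 - (sOm.esymm (k' + 1) * (m.choose (k' + 1) : ℝ)) * hsub
      · have hkm' : k' + 1 = m := by omega
        have hz : sOm.esymm (k' + 1) = 0 := esymm_of_card_lt (by omega)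
        rw [hz, show m - (k' + 1) = 0 by omega]
        simp
    have lhs_eq : (m : ℝ) * Nk sM (k' + 1)
        = (m : ℝ) * (sOm.esymm (k' + 1) / (m.choose (k' + 1) : ℝ))
          + (m : ℝ) * (lam l * sOm.esymm k' / (m.choose (k' + 1) : ℝ)) := by
      rw [Nk, hcardM, hE]
      ring
    rw [lhs_eq, t1, t2, show k' + 1 - 1 = k' by omega]
  have hApos : ∀ k, k ≤ p - 1 → 0 < Nk sOm k := by
    intro k hk
    rcases Nat.eq_zero_or_pos k with rfl | hk1
    · rw [Nk_zero]; norm_num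
    · have h := hposOmit k hk1 hk l
      rwa [hHkO] at h
  have hchain : ∀ b, i + 1 ≤ b → b ≤ p →
      Nk sOm b * Nk sOm (i - 1) ≤ Nk sOm i * Nk sOm (b - 1) := by
    intro b hb
    induction b, hb using Nat.le_induction with
    | base =>
        intro _
        have hN := newton_ms (m - 1) sOm hcardOm i hi
        rw [show i + 1 - 1 = i by omega]
        nlinarith [hN]
    | succ b hab IH =>
        intro hbp
        have hNb := newton_ms (m - 1) sOm hcardOm b (by omega)
        have hIH := IH (by omega)
        have hAi : 0 < Nk sOm i := hApos i (by omega)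
        have hAim : 0 < Nk sOm (i - 1) := hApos (i - 1) (by omega)
        have hAb : 0 < Nk sOm b := hApos b (by omega)
        have hAbm : 0 < Nk sOm (b - 1) := hApos (b - 1) (by omega)
        rw [show b + 1 - 1 = b by omega]
        have h1 : Nk sOm (b - 1) * (Nk sOm (b + 1) * Nk sOm (i - 1))
            ≤ Nk sOm (b - 1) * (Nk sOm i * Nk sOm b) := by
          nlinarith [mul_le_mul_of_nonneg_right hNb hAim.le,
            mul_le_mul_of_nonneg_left hIH hAb.le]
        exact le_of_mul_le_mul_left h1 hAbm
  have hjm : j ≤ m := by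
    by_contra hjm
    have hempty : (Finset.univ : Finset (Fin m)).powersetCard j = ∅ :=
      Finset.powersetCard_eq_empty.mpr (by simp; omega)
    have hz : Hk m j lam = 0 := by
      rw [Hk, esymm, hempty]
      simp
    have h := hpos j (by omega) hjp
    rw [hz] at h
    exact lt_irrefl 0 h
  -- final assembly
  have hri := hrecur i hi (by omega)
  have hrj := hrecur j (by omega) hjm
  have hch := hchain j (by omega) hjp
  have hAi : 0 < Nk sOm i := hApos i (by omega)
  have hAim : 0 < Nk sOm (i - 1) := hApos (i - 1) (by omega)
  have hAjm : 0 < Nk sOm (j - 1) := hApos (j - 1) (by omega)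
  have hcmj : ((m - j : ℕ) : ℝ) = (m : ℝ) - (j : ℝ) := by
    push_cast [Nat.cast_sub hjm]; ring
  have hcmi : ((m - i : ℕ) : ℝ) = (m : ℝ) - (i : ℝ) := by
    push_cast [Nat.cast_sub (by omega : i ≤ m)]; ring
  rw [hHk, hHk, hHkO, hHkO]
  rw [← mul_lt_mul_iff_right₀ hmR]
  have expand1 : (m : ℝ) * ((i : ℝ) * Nk sM j * Nk sOm (i - 1))
      = (i : ℝ) * (((m - j : ℕ) : ℝ) * Nk sOm j + (j : ℝ) * lam l * Nk sOm (j - 1))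
        * Nk sOm (i - 1) := by
    linear_combination ((i : ℝ) * Nk sOm (i - 1)) * hrj
  have expand2 : (m : ℝ) * ((j : ℝ) * Nk sM i * Nk sOm (j - 1))
      = (j : ℝ) * (((m - i : ℕ) : ℝ) * Nk sOm i + (i : ℝ) * lam l * Nk sOm (i - 1))
        * Nk sOm (j - 1) := by
    linear_combination ((j : ℝ) * Nk sOm (j - 1)) * hri
  rw [expand1, expand2, hcmj, hcmi]
  have hijR : (i : ℝ) < (j : ℝ) := by exact_mod_cast hij
  have hjmR : (j : ℝ) ≤ (m : ℝ) := by exact_mod_cast hjm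
  have hcoef : (i : ℝ) * ((m : ℝ) - (j : ℝ)) < (j : ℝ) * ((m : ℝ) - (i : ℝ)) := by nlinarith
  have hiR : (0 : ℝ) ≤ (i : ℝ) := by positivity
  have hnonneg : (0 : ℝ) ≤ (i : ℝ) * ((m : ℝ) - (j : ℝ)) := by
    apply mul_nonneg hiR
    linarith
  have hstep1 := mul_le_mul_of_nonneg_left hch hnonneg
  have hstep2 := mul_lt_mul_of_pos_right hcoef (mul_pos hAi hAjm)
  nlinarith [hstep1, hstep2]
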